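/- Let α ≥ 0 be a real constant and let f : [0,1] → ℝ be a continuously differentiable function that is not identically zero. Then the Rayleigh–Ritz ratio satisfies the lower bound (α·(f(0)² + f(1)²) + ∫₀¹ (f′(z))² dz) / (∫₀¹ f(z)² dz) ≥ ((−α + √(α² + 8π²α)) / (4π))². -/

import Mathlib

open Real intervalIntegral Set

/-- **Rayleigh–Ritz lower bound** (Lemma, Appendix B).
For a non-negative constant `α` and a continuously differentiable trial
function `f` on `[0,1]` (with derivative `f'`) that is not identically zero,
the Rayleigh–Ritz ratio
`(α (f(0)² + f(1)²) + ∫₀¹ f'(z)² dz) / ∫₀¹ f(z)² dz`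
is bounded below by `((−α + √(α² + 8π²α)) / (4π))²`. -/
theorem rayleigh_ritz_lower_bound
    (α : ℝ) (hα : 0 ≤ α) (f f' : ℝ → ℝ)
    (hderiv : ∀ z ∈ Set.Icc (0 : ℝ) 1, HasDerivAt f (f' z) z)
    (hcont : ContinuousOn f' (Set.Icc (0 : ℝ) 1))
    (hne : ∃ z ∈ Set.Icc (0 : ℝ) 1, f z ≠ 0) :
    ((-α + Real.sqrt (α ^ 2 + 8 * Real.pi ^ 2 * α)) / (4 * Real.pi)) ^ 2 ≤
      (α * ((f 0) ^ 2 + (f 1) ^ 2) + ∫ z in (0 : ℝ)..1, (f' z) ^ 2) /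
        (∫ z in (0 : ℝ)..1, (f z) ^ 2) := by
  have hπ : (0:ℝ) < π := Real.pi_pos
  obtain ⟨z₀, hz₀, hz₀ne⟩ := hne
  have hfc : ContinuousOn f (Set.Icc (0:ℝ) 1) := fun z hz =>
    (hderiv z hz).continuousAt.continuousWithinAt
  have hD : 0 < ∫ z in (0:ℝ)..1, (f z)^2 := by
    apply intervalIntegral.integral_pos (by norm_num)
    · exact hfc.pow 2
    · intro x _; positivity
    · exact ⟨z₀, hz₀, by positivity⟩
  rw [le_div_iff₀ hD]
  set s := Real.sqrt (α ^ 2 + 8 * π ^ 2 * α) with hsdef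
  have hs0 : 0 ≤ s := Real.sqrt_nonneg _
  have hs2 : s ^ 2 = α ^ 2 + 8 * π ^ 2 * α := Real.sq_sqrt (by positivity)
  have hsπ : s < α + 4 * π ^ 2 := by
    rw [hsdef, show α + 4*π^2 = α + 4*π^2 from rfl]
    rw [Real.sqrt_lt' (by positivity)]
    nlinarith [pow_pos hπ 4]
  set μ := (-α + s) / (4 * π) with hμdef
  have hαs : α ≤ s := by nlinarith
  have hμ0 : 0 ≤ μ := div_nonneg (by linarith) (by positivity)
  have hμπ : μ < π := by
    rw [hμdef, div_lt_iff₀ (by positivity)]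
    nlinarith
  have h4 : 4 * π * μ = -α + s := by
    rw [hμdef]; field_simp
  have key : 2 * π * μ ^ 2 = α * (π - μ) := by
    have h8 : (8*π) * (2 * π * μ ^ 2) = (8*π) * (α * (π - μ)) := by
      linear_combination (4*π*μ + s + α) * h4 + hs2
    exact mul_left_cancel₀ (by positivity) h8
  clear_value s μ
  clear hsdef hμdef hsπ h4 hs2 hs0 hαs
  -- the auxiliary function
  set φ : ℝ → ℝ := fun z => -μ * Real.tan (μ * (z - 1/2)) with hφdef
  have hcosu : ∀ z ∈ Set.Icc (0:ℝ) 1, 0 < Real.cos (μ * (z - 1/2)) := by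
    intro z hz
    apply Real.cos_pos_of_mem_Ioo
    constructor
    · nlinarith [hz.1, hz.2]
    · nlinarith [hz.1, hz.2]
  have hφd : ∀ z ∈ Set.Icc (0:ℝ) 1,
      HasDerivAt φ (-μ^2 - (φ z)^2) z := by
    intro z hz
    have hc := (hcosu z hz).ne'
    have h1 : HasDerivAt (fun z : ℝ => μ * (z - 1/2)) μ z := by
      exact (((hasDerivAt_id z).sub_const (1/2)).const_mul μ).congr_deriv (mul_one μ)
    have h2 := (Real.hasDerivAt_tan hc).comp z h1
    have h3 := h2.const_mul (-μ)
    refine h3.congr_deriv (Eq.symm ?_)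
    have htsq : (1:ℝ) / Real.cos (μ * (z - 1/2)) ^ 2
        = 1 + Real.tan (μ * (z - 1/2)) ^ 2 := by
      rw [one_div, ← Real.inv_one_add_tan_sq hc, inv_inv]
    show -μ^2 - (-μ * Real.tan (μ * (z - 1/2)))^2
        = -μ * (1 / Real.cos (μ * (z - 1/2)) ^ 2 * μ)
    rw [htsq]; ring
  have hφc : ContinuousOn φ (Set.Icc (0:ℝ) 1) := fun z hz =>
    ((hφd z hz).continuousAt).continuousWithinAt
  -- FTC
  have huIcc : Set.uIcc (0:ℝ) 1 = Set.Icc (0:ℝ) 1 := Set.uIcc_of_le (by norm_num)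
  have hG : ∀ z ∈ Set.uIcc (0:ℝ) 1,
      HasDerivAt (fun z => f z ^ 2 * φ z)
        (f' z ^ 2 - μ^2 * f z ^ 2 - (f' z - φ z * f z)^2) z := by
    rw [huIcc]
    intro z hz
    have h1 : HasDerivAt (fun z => f z ^ 2) (2 * f z * f' z) z := by
      simpa [mul_comm] using (hderiv z hz).fun_pow 2
    have h2 := h1.mul (hφd z hz)
    refine h2.congr_deriv (Eq.symm ?_)
    ring
  have hIcont : ContinuousOn
      (fun z => f' z ^ 2 - μ^2 * f z ^ 2 - (f' z - φ z * f z)^2) (Set.Icc (0:ℝ) 1) :=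
    ((hcont.pow 2).sub (continuousOn_const.mul (hfc.pow 2))).sub
      ((hcont.sub (hφc.mul hfc)).pow 2)
  have hftc : (∫ z in (0:ℝ)..1, (f' z ^ 2 - μ^2 * f z ^ 2 - (f' z - φ z * f z)^2))
      = f 1 ^ 2 * φ 1 - f 0 ^ 2 * φ 0 :=
    intervalIntegral.integral_eq_sub_of_hasDerivAt hG
      ((hIcont.mono huIcc.subset).intervalIntegrable)
  have hint1 : IntervalIntegrable (fun z => f' z ^ 2) MeasureTheory.volume 0 1 := by
    apply ContinuousOn.intervalIntegrable; rw [huIcc]; exact hcont.pow 2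
  have hint2 : IntervalIntegrable (fun z => μ^2 * f z ^ 2) MeasureTheory.volume 0 1 := by
    apply ContinuousOn.intervalIntegrable; rw [huIcc]
    exact continuousOn_const.mul (hfc.pow 2)
  have hint3 : IntervalIntegrable (fun z => (f' z - φ z * f z)^2) MeasureTheory.volume 0 1 := by
    apply ContinuousOn.intervalIntegrable; rw [huIcc]
    exact (hcont.sub (hφc.mul hfc)).pow 2
  have hsplit : (∫ z in (0:ℝ)..1, (f' z ^ 2 - μ^2 * f z ^ 2 - (f' z - φ z * f z)^2))
      = (∫ z in (0:ℝ)..1, f' z ^ 2) - μ^2 * (∫ z in (0:ℝ)..1, f z ^ 2)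
        - (∫ z in (0:ℝ)..1, (f' z - φ z * f z)^2) := by
    rw [intervalIntegral.integral_sub (hint1.sub hint2) hint3,
      intervalIntegral.integral_sub hint1 hint2,
      intervalIntegral.integral_const_mul]
  have hnn : 0 ≤ ∫ z in (0:ℝ)..1, (f' z - φ z * f z)^2 :=
    intervalIntegral.integral_nonneg (by norm_num) (fun u _ => sq_nonneg _)
  -- boundary values
  have hφ1 : φ 1 = -μ * Real.tan (μ/2) := by
    show -μ * Real.tan (μ * ((1:ℝ) - 1/2)) = -μ * Real.tan (μ/2)
    rw [show μ * ((1:ℝ) - 1/2) = μ/2 by ring]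
  have hφ0 : φ 0 = μ * Real.tan (μ/2) := by
    show -μ * Real.tan (μ * ((0:ℝ) - 1/2)) = μ * Real.tan (μ/2)
    rw [show μ * ((0:ℝ) - 1/2) = -(μ/2) by ring, Real.tan_neg]; ring
  -- boundary coefficient bound  μ·tan(μ/2) ≤ α
  have hbd : μ * Real.tan (μ/2) ≤ α := by
    rcases eq_or_lt_of_le hμ0 with h | h
    · rw [← h]; simpa using hα
    · have hj := Real.mul_le_sin (x := π/2 - μ/2) (by linarith) (by linarith)
      rw [Real.sin_pi_div_two_sub] at hj
      have heq : (π - μ)/π = 2/π * (π/2 - μ/2) := by field_simp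
      have hc : (π - μ)/π ≤ Real.cos (μ/2) := by rw [heq]; exact hj
      have hdpos : 0 < (π - μ)/π := div_pos (by linarith) hπ
      have hsin : Real.sin (μ/2) ≤ μ/2 := Real.sin_le (by linarith)
      have htan : Real.tan (μ/2) ≤ (μ/2) / ((π - μ)/π) := by
        rw [Real.tan_eq_sin_div_cos]
        exact div_le_div₀ (by linarith) hsin hdpos hc
      have heq2 : μ * ((μ/2) / ((π - μ)/π)) = (π * μ^2) / (2 * (π - μ)) := by
        field_simp
      have h2 : μ * ((μ/2) / ((π - μ)/π)) ≤ α := by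
        rw [heq2, div_le_iff₀ (by linarith : (0:ℝ) < 2 * (π - μ))]
        nlinarith [key, mul_nonneg hα (by linarith : (0:ℝ) ≤ π - μ)]
      calc μ * Real.tan (μ/2) ≤ μ * ((μ/2) / ((π - μ)/π)) :=
            mul_le_mul_of_nonneg_left htan hμ0
        _ ≤ α := h2
  -- conclude
  rw [hφ1, hφ0, hsplit] at hftc
  have hb0 : μ * Real.tan (μ/2) * (f 0)^2 ≤ α * (f 0)^2 :=
    mul_le_mul_of_nonneg_right hbd (sq_nonneg _)
  have hb1 : μ * Real.tan (μ/2) * (f 1)^2 ≤ α * (f 1)^2 :=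
    mul_le_mul_of_nonneg_right hbd (sq_nonneg _)
  nlinarith [hftc, hnn, hb0, hb1]
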